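/- Fix N ≥ 1 and 0 ≤ s ≤ N. Let π = (π_0,…,π_{N−1}) be a permutation of (0,1,…,N−1) and define the N×N matrix E^{[N,s]}(π) over ℚ by E_{i,j} = (π_i + j)!/(π_i! j!) for 0 ≤ i ≤ N−s−1 and E_{i,j} = (π_i + j + 1)!/(π_i! j!) for N−s ≤ i ≤ N−1, with 0 ≤ j ≤ N−1. If (π_0,…,π_{N−s−1}) is a permutation of (0,…,N−s−1) and (π_{N−s},…,π_{N−1}) is a permutation of (N−s,…,N−1), then sgn(π) · det E^{[N,s]}(π) = (N!)² / (s! ((N−s)!)²); otherwise det E^{[N,s]}(π) = 0. -/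

import Mathlib

open Finset

namespace Stmt11Aux

/-- degree function -/
def w (m k : ℕ) : ℕ := if k < m then k else k + 1

lemma w_lt {m i j : ℕ} (h : i < j) : w m i < w m j := by
  unfold w; split <;> split <;> omega

/-- Vandermonde-type product -/
def P (m n : ℕ) : ℕ := ∏ i ∈ range n, ∏ j ∈ Ico (i+1) n, (w m j - w m i)

lemma P_succ (m n : ℕ) : P m (n+1) = P m n * ∏ i ∈ range n, (w m n - w m i) := by
  unfold P
  rw [prod_range_succ, Ico_self, prod_empty, mul_one, ← prod_mul_distrib]
  refine prod_congr rfl fun i hi => ?_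
  rw [mem_range] at hi
  rw [prod_Ico_succ_top (by omega)]

lemma prod_sub_range (n : ℕ) : ∏ i ∈ range n, (n - i) = n.factorial := by
  induction n with
  | zero => simp
  | succ n ih =>
    rw [prod_range_succ']
    simp only [Nat.succ_sub_succ, Nat.sub_zero]
    rw [ih, Nat.factorial_succ, mul_comm]

lemma P_of_le {m n : ℕ} (h : n ≤ m) : P m n = ∏ j ∈ range n, j.factorial := by
  induction n with
  | zero => simp [P]
  | succ n ih =>
    rw [P_succ, ih (by omega), prod_range_succ]
    congr 1
    rw [← prod_sub_range n]
    refine prod_congr rfl fun i hi => ?_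
    rw [mem_range] at hi
    unfold w
    rw [if_pos (by omega), if_pos (by omega)]

lemma prod_A (m t : ℕ) : (∏ i ∈ range m, (m + t + 1 - i)) * (t+1).factorial = (m + t + 1).factorial := by
  induction m with
  | zero => simp
  | succ m ih =>
    have : ∏ i ∈ range (m+1), (m + 1 + t + 1 - i)
        = (∏ i ∈ range m, (m + t + 1 - i)) * (m + t + 2) := by
      rw [prod_range_succ']
      congr 1
      · refine prod_congr rfl fun i hi => ?_
        omega
      · omega
    rw [this]
    have h2 : m + 1 + t + 1 = (m + t + 1) + 1 := by omega
    rw [h2, Nat.factorial_succ (m+t+1), ← ih]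
    ring

lemma P_main (m t : ℕ) :
    P m (m + t) * (m.factorial * t.factorial)
      = (∏ j ∈ range (m+t), j.factorial) * (m+t).factorial := by
  induction t with
  | zero => simp [P_of_le (le_refl m)]
  | succ t ih =>
    have hms : m + (t+1) = (m + t) + 1 := by omega
    rw [hms, P_succ]
    have hw : w m (m + t) = m + t + 1 := by unfold w; rw [if_neg (by omega)]
    have hsplit : ∏ i ∈ range (m+t), (w m (m+t) - w m i)
        = (∏ i ∈ range m, (m + t + 1 - i)) * t.factorial := by
      rw [range_eq_Ico, ← prod_Ico_consecutive _ (Nat.zero_le m) (Nat.le_add_right m t),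
        ← range_eq_Ico]
      congr 1
      · refine prod_congr rfl fun i hi => ?_
        rw [mem_range] at hi
        rw [hw]; unfold w; rw [if_pos (by omega)]
      · rw [prod_Ico_eq_prod_range]
        simp only [Nat.add_sub_cancel_left]
        rw [← prod_sub_range t]
        refine prod_congr rfl fun i hi => ?_
        rw [mem_range] at hi
        rw [hw]; unfold w; rw [if_neg (by omega)]
        omega
    rw [hsplit]
    have key : (P m (m + t) * ((∏ i ∈ range m, (m + t + 1 - i)) * t.factorial)) *
        (m.factorial * (t+1).factorial)
        = (P m (m + t) * (m.factorial * t.factorial)) *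
          ((∏ i ∈ range m, (m + t + 1 - i)) * (t+1).factorial) := by ring
    rw [key, ih, prod_A, prod_range_succ, Nat.factorial_succ (m+t)]

open Polynomial in
section
open Polynomial


noncomputable def p (j : ℕ) : ℚ[X] := ∏ t ∈ range j, (X + C ((t : ℚ) + 1))

lemma p_monic (j : ℕ) : (p j).Monic :=
  monic_prod_of_monic _ _ fun t _ => monic_X_add_C _

lemma p_natDegree (j : ℕ) : (p j).natDegree = j := by
  unfold p
  rw [natDegree_prod_of_monic _ _ fun t _ => monic_X_add_C _]
  have h : ∀ t ∈ range j, (X + C ((t:ℚ)+1)).natDegree = 1 := fun t _ => natDegree_X_add_C _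
  rw [Finset.sum_congr rfl h]
  simp

lemma p_eval (j : ℕ) (x : ℚ) : (p j).eval x = ∏ t ∈ range j, (x + t + 1) := by
  unfold p
  rw [eval_prod]
  refine prod_congr rfl fun t _ => ?_
  simp [add_assoc]

lemma fact_add (a j : ℕ) : (a + j).factorial = a.factorial * ∏ t ∈ range j, (a + t + 1) := by
  induction j with
  | zero => simp
  | succ j ih =>
    rw [prod_range_succ, ← mul_assoc, ← ih, show a + (j+1) = (a + j) + 1 by omega,
      Nat.factorial_succ, mul_comm]

lemma fact_eval (a j : ℕ) :
    (((a + j).factorial : ℚ)) = (a.factorial : ℚ) * (p j).eval (a : ℚ) := by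
  rw [p_eval, fact_add]
  push_cast
  ring

/-- convert a Fin double product over `Ioi` into a nat double product -/
lemma fin_double_prod {N : ℕ} (f : ℕ → ℕ → ℚ) :
    (∏ i : Fin N, ∏ j ∈ Ioi i, f i.val j.val)
      = ∏ i ∈ range N, ∏ j ∈ Ico (i+1) N, f i j := by
  have hinner : ∀ i : Fin N, (∏ j ∈ Ioi i, f i.val j.val)
      = ∏ j ∈ Ico (i.val+1) N, f i.val j := by
    intro i
    calc (∏ j ∈ Ioi i, f i.val j.val)
        = ∏ j ∈ (Ioi i).map Fin.valEmbedding, f i.val j := by rw [prod_map]; rfl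
      _ = ∏ j ∈ Ico (i.val+1) N, f i.val j := by
          rw [Fin.map_valEmbedding_Ioi]
          congr 1
  simp only [hinner]
  exact Fin.prod_univ_eq_prod_range (fun i => ∏ j ∈ Ico (i+1) N, f i j) N

lemma c_prod (m t : ℕ) :
    (∏ k ∈ range (m+t), (if k < m then 1 else k+1)) * m.factorial = (m+t).factorial := by
  induction t with
  | zero =>
    simp only [Nat.add_zero]
    rw [prod_eq_one fun k hk => if_pos (mem_range.mp hk), one_mul]
  | succ t ih =>
    rw [show m + (t+1) = (m+t)+1 by omega, prod_range_succ, if_neg (by omega),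
      Nat.factorial_succ (m+t), ← ih]
    ring

end
end Stmt11Aux

open Stmt11Aux Finset Polynomial

/-- The matrix `E^{[N,s]}(π)` with entries `(π_i+j)!/(π_i! j!)` in the first `N-s` rows and
`(π_i+j+1)!/(π_i! j!)` in the last `s` rows. -/
noncomputable def Emat (N s : ℕ) (π : Equiv.Perm (Fin N)) : Matrix (Fin N) (Fin N) ℚ :=
  Matrix.of fun i j =>
    if (i : ℕ) < N - s then
      (Nat.factorial ((π i : ℕ) + (j : ℕ)) : ℚ) /
        ((Nat.factorial (π i : ℕ) : ℚ) * (Nat.factorial (j : ℕ) : ℚ))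
    else
      (Nat.factorial ((π i : ℕ) + (j : ℕ) + 1) : ℚ) /
        ((Nat.factorial (π i : ℕ) : ℚ) * (Nat.factorial (j : ℕ) : ℚ))

lemma det_Emat_one (N s : ℕ) (hs : s ≤ N) :
    (Emat N s 1).det =
      (N.factorial : ℚ) ^ 2 / ((s.factorial : ℚ) * ((N - s).factorial : ℚ) ^ 2) := by
  set m := N - s with hm
  have hms : m + s = N := by omega
  have hentry : Emat N s 1 = Matrix.of (fun k j : Fin N =>
      (((if (k:ℕ) < m then 1 else (k:ℕ)+1 : ℕ)) : ℚ) *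
        (Matrix.of (fun k j : Fin N =>
          (1/(((j:ℕ).factorial : ℕ) : ℚ)) * (Matrix.of (fun k j : Fin N =>
            (p (j:ℕ)).eval (((w m (k:ℕ) : ℕ)) : ℚ)) k j)) k j)) := by
    ext k j
    simp only [Emat, Matrix.of_apply, Equiv.Perm.coe_one, id_eq]
    have hjf : (((j:ℕ).factorial : ℕ) : ℚ) ≠ 0 := Nat.cast_ne_zero.mpr (Nat.factorial_ne_zero _)
    have hkf : (((k:ℕ).factorial : ℕ) : ℚ) ≠ 0 := Nat.cast_ne_zero.mpr (Nat.factorial_ne_zero _)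
    by_cases h : (k:ℕ) < m
    · rw [if_pos h, if_pos h]
      have hw : w m (k:ℕ) = (k:ℕ) := if_pos h
      rw [hw, fact_eval]
      push_cast
      field_simp
    · rw [if_neg h, if_neg h]
      have hw : w m (k:ℕ) = (k:ℕ)+1 := if_neg h
      have h2 : (k:ℕ) + (j:ℕ) + 1 = ((k:ℕ)+1) + (j:ℕ) := by omega
      rw [hw, h2, fact_eval, Nat.factorial_succ (k:ℕ)]
      push_cast
      field_simp
  rw [hentry, Matrix.det_mul_column, Matrix.det_mul_row]
  have hdetB : (Matrix.of (fun k j : Fin N =>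
      (p (j:ℕ)).eval (((w m (k:ℕ) : ℕ)) : ℚ))).det = ((P m N : ℕ) : ℚ) := by
    rw [← Matrix.det_eval_matrixOfPolynomials_eq_det_vandermonde
        (fun k : Fin N => (((w m (k:ℕ) : ℕ)) : ℚ)) (fun j : Fin N => p (j:ℕ))
        (fun j => p_natDegree _) (fun j => p_monic _)]
    rw [Matrix.det_vandermonde]
    have h1 : (∏ i : Fin N, ∏ j ∈ Ioi i,
          ((((w m (j:ℕ) : ℕ)) : ℚ) - (((w m (i:ℕ) : ℕ)) : ℚ)))
        = ∏ i : Fin N, ∏ j ∈ Ioi i, (((w m (j:ℕ) - w m (i:ℕ) : ℕ)) : ℚ) :=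
      Finset.prod_congr rfl fun i _ => Finset.prod_congr rfl fun j hj => by
        have hij0 : i < j := Finset.mem_Ioi.mp hj
        have hij : (i:ℕ) < (j:ℕ) := hij0
        rw [← Nat.cast_sub (le_of_lt (w_lt hij))]
    rw [h1, fin_double_prod (fun a b => ((w m b - w m a : ℕ) : ℚ))]
    simp only [P, Nat.cast_prod]
  rw [hdetB]
  have hC : (∏ k : Fin N, (((if (k:ℕ) < m then 1 else (k:ℕ)+1 : ℕ)) : ℚ))
      = ((∏ k ∈ range N, (if k < m then 1 else k+1) : ℕ) : ℚ) := by
    rw [Nat.cast_prod]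
    exact Fin.prod_univ_eq_prod_range (fun k => (((if k < m then 1 else k+1 : ℕ)) : ℚ)) N
  have hF : (∏ j : Fin N, (1/(((j:ℕ).factorial : ℕ) : ℚ)))
      = 1/(((∏ j ∈ range N, j.factorial : ℕ)) : ℚ) := by
    simp only [one_div]
    rw [Nat.cast_prod, ← Finset.prod_inv_distrib]
    exact Fin.prod_univ_eq_prod_range (fun j => ((j.factorial : ℚ))⁻¹) N
  rw [hC, hF]
  have hc : ((∏ k ∈ range N, (if k < m then 1 else k+1) : ℕ)) * m.factorial = N.factorial := by
    have := c_prod m s; rw [hms] at this; exact this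
  have hp : P m N * (m.factorial * s.factorial)
      = (∏ j ∈ range N, j.factorial) * N.factorial := by
    have := P_main m s; rw [hms] at this; exact this
  have hcq : (((∏ k ∈ range N, (if k < m then 1 else k+1) : ℕ)) : ℚ) * (m.factorial : ℚ)
      = (N.factorial : ℚ) := by exact_mod_cast congrArg (Nat.cast (R := ℚ)) hc
  have hpq : ((P m N : ℕ) : ℚ) * ((m.factorial : ℚ) * (s.factorial : ℚ))
      = ((∏ j ∈ range N, j.factorial : ℕ) : ℚ) * (N.factorial : ℚ) := by
    exact_mod_cast congrArg (Nat.cast (R := ℚ)) hp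
  have hSF : ((∏ j ∈ range N, j.factorial : ℕ) : ℚ) ≠ 0 :=
    Nat.cast_ne_zero.mpr (Finset.prod_ne_zero_iff.mpr fun j _ => Nat.factorial_ne_zero j)
  have hmf : ((m.factorial : ℕ) : ℚ) ≠ 0 := Nat.cast_ne_zero.mpr (Nat.factorial_ne_zero _)
  have hsf : ((s.factorial : ℕ) : ℚ) ≠ 0 := Nat.cast_ne_zero.mpr (Nat.factorial_ne_zero _)
  push_cast at hcq hpq ⊢
  field_simp
  push_cast
  linear_combination (((P m N : ℕ) : ℚ) * (s.factorial : ℚ) * (m.factorial : ℚ)) * hcq +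
    ((N.factorial : ℚ)) * hpq

theorem stmt11 (N s : ℕ) (hN : 1 ≤ N) (hs : s ≤ N) (π : Equiv.Perm (Fin N)) :
    ((∀ i : Fin N, (i : ℕ) < N - s → ((π i : ℕ) < N - s)) →
      ((Equiv.Perm.sign π : ℤ) : ℚ) * (Emat N s π).det =
        (N.factorial : ℚ) ^ 2 / ((s.factorial : ℚ) * ((N - s).factorial : ℚ) ^ 2)) ∧
    ((¬ ∀ i : Fin N, (i : ℕ) < N - s → ((π i : ℕ) < N - s)) →
      (Emat N s π).det = 0) := by
  constructor
  · intro hπ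
    set m := N - s with hm
    have key : ∀ i : Fin N, (i:ℕ) < m ↔ ((π i : ℕ) < m) := by
      set T : Finset (Fin N) := univ.filter (fun i => (i:ℕ) < m) with hT
      have hsub : T.image π ⊆ T := by
        intro a ha
        simp only [hT, mem_image, mem_filter, mem_univ, true_and] at ha ⊢
        obtain ⟨i, hi, rfl⟩ := ha
        exact hπ i hi
      have heq : T.image π = T :=
        eq_of_subset_of_card_le hsub (by rw [card_image_of_injective _ π.injective])
      intro i
      constructor
      · exact hπ i
      · intro h
        have hmem : π i ∈ T := by simp [hT, h]
        rw [← heq] at hmem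
        simp only [mem_image] at hmem
        obtain ⟨i₀, hi₀, he⟩ := hmem
        have : i₀ = i := π.injective he
        subst this
        simp only [hT, mem_filter, mem_univ, true_and] at hi₀
        exact hi₀
    have hmat : Emat N s π = (Emat N s 1).submatrix π id := by
      ext i j
      simp only [Emat, Matrix.of_apply, Matrix.submatrix_apply, id_eq, Equiv.Perm.coe_one]
      by_cases h : (i:ℕ) < m
      · rw [if_pos h, if_pos ((key i).1 h)]
      · rw [if_neg h, if_neg (fun hc => h ((key i).2 hc))]
    rw [hmat, Matrix.det_permute, ← mul_assoc]
    have hsq : ((Equiv.Perm.sign π : ℤ) : ℚ) * ((Equiv.Perm.sign π : ℤ) : ℚ) = 1 := by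
      rw [← Int.cast_mul, ← Units.val_mul, Int.units_mul_self, Units.val_one, Int.cast_one]
    rw [hsq, one_mul]
    exact det_Emat_one N s hs
  · intro h
    set m := N - s with hm
    push_neg at h
    obtain ⟨i₀, hi₀, hπi₀⟩ := h
    by_cases hpair : ∃ i i' : Fin N, (i:ℕ) < m ∧ ¬((i':ℕ) < m) ∧ (π i : ℕ) = (π i' : ℕ) + 1
    · obtain ⟨i, i', h1, h2, h3⟩ := hpair
      have hne : i' ≠ i := fun he => h2 (he ▸ h1)
      have hπi0 : ((π i : ℕ) : ℚ) ≠ 0 := by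
        have : (π i : ℕ) ≠ 0 := by omega
        exact_mod_cast Nat.cast_ne_zero.mpr this
      have hrow : (Emat N s π) i' = (((π i : ℕ)) : ℚ) • (Emat N s π) i := by
        funext j
        simp only [Emat, Matrix.of_apply, Pi.smul_apply, smul_eq_mul]
        rw [if_pos h1, if_neg h2]
        have e1 : (π i' : ℕ) + (j:ℕ) + 1 = (π i : ℕ) + (j:ℕ) := by omega
        have e2 : (π i : ℕ).factorial = (π i :ℕ) * (π i' : ℕ).factorial := by
          rw [show (π i : ℕ) = (π i' :ℕ)+1 from h3, Nat.factorial_succ]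
        have hf1 : (((π i' : ℕ).factorial : ℕ) : ℚ) ≠ 0 :=
          Nat.cast_ne_zero.mpr (Nat.factorial_ne_zero _)
        have hfj : (((j : ℕ).factorial : ℕ) : ℚ) ≠ 0 :=
          Nat.cast_ne_zero.mpr (Nat.factorial_ne_zero _)
        rw [e1, e2]
        push_cast
        field_simp
      have hupd : Emat N s π
          = (Emat N s π).updateRow i' ((((π i : ℕ)) : ℚ) • (Emat N s π) i) := by
        rw [← hrow, Matrix.updateRow_eq_self]
      have hzero : ((Emat N s π).updateRow i' ((Emat N s π) i)).det = 0 := by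
        refine Matrix.det_zero_of_row_eq hne ?_
        rw [Matrix.updateRow_self, Matrix.updateRow_ne (Ne.symm hne)]
      conv_lhs => rw [hupd]
      rw [Matrix.det_updateRow_smul, hzero, mul_zero]
    · exfalso
      push_neg at hpair
      set V : Finset (Fin N) := (univ.filter fun i : Fin N => (i:ℕ) < m).image π with hV
      set S : Finset ℕ := V.image Fin.val with hS
      have hstep : ∀ a ∈ S, ∀ b : ℕ, b + 1 = a → b ∈ S := by
        intro a ha b hb
        simp only [hS, hV, mem_image, mem_filter, mem_univ, true_and] at ha
        obtain ⟨x, ⟨i, hi, rfl⟩, rfl⟩ := ha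
        have hbN : b < N := by have := (π i).isLt; omega
        set i' := π.symm ⟨b, hbN⟩ with hi'
        have hπi' : π i' = ⟨b, hbN⟩ := π.apply_symm_apply _
        by_cases hc : (i':ℕ) < m
        · simp only [hS, hV, mem_image, mem_filter, mem_univ, true_and]
          exact ⟨⟨b, hbN⟩, ⟨i', ⟨hc, hπi'⟩⟩, rfl⟩
        · exact absurd (by rw [hπi']; exact hb.symm) (hpair i i' hi (le_of_not_gt hc))
      have hdown : ∀ k a, a ∈ S → a - k ∈ S := by
        intro k
        induction k with
        | zero => intro a ha; simpa using ha
        | succ k ih =>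
          intro a ha
          have h1 := ih a ha
          by_cases hz : a - k = 0
          · rw [show a - (k+1) = a - k by omega]; exact h1
          · exact hstep (a-k) h1 (a - (k+1)) (by omega)
      have hmN : m ≤ N := by omega
      have himg : (univ.filter fun i : Fin N => (i:ℕ) < m).image Fin.val = range m := by
        ext x
        simp only [mem_image, mem_filter, mem_univ, true_and, mem_range]
        constructor
        · rintro ⟨i, hi, rfl⟩; exact hi
        · intro hx; exact ⟨⟨x, by omega⟩, hx, rfl⟩
      have hcardT : (univ.filter fun i : Fin N => (i:ℕ) < m).card = m := by
        have hcg := congrArg Finset.card himg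
        rwa [card_image_of_injective _ Fin.val_injective, card_range] at hcg
      have hcardV : V.card = m := by
        rw [hV, card_image_of_injective _ π.injective, hcardT]
      have hcardS : S.card = m := by
        rw [hS, card_image_of_injective _ Fin.val_injective, hcardV]
      have haS : (π i₀ : ℕ) ∈ S := by
        simp only [hS, hV, mem_image, mem_filter, mem_univ, true_and]
        exact ⟨π i₀, ⟨i₀, hi₀, rfl⟩, rfl⟩
      have hsubs : range ((π i₀ :ℕ) + 1) ⊆ S := by
        intro b hb
        rw [mem_range] at hb
        have hd := hdown ((π i₀ :ℕ) - b) _ haS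
        rwa [show (π i₀:ℕ) - ((π i₀:ℕ) - b) = b by omega] at hd
      have hle := card_le_card hsubs
      rw [card_range, hcardS] at hle
      omega
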